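/- In the high-SNR limit, the outage probability of Theorem 1 tends to a nonzero floor for the far user: with X, Z independent Gamma(m, m) variables and fixed A > 0, lim_{B_0 → 0} P(X < A Z + B_0) = P(X < A Z) = 1 − Σ_{r=0}^{m−1} C(m−1+r, r) A^r / (A+1)^{m+r} > 0. Equivalently, P(X ≥ A Z) = Σ_{r=0}^{m−1} Γ(m+r)/(Γ(m) r!) · A^r/(A+1)^{m+r}. -/

import Mathlib

open MeasureTheory Real Set Finset Filter

/-- The law of a unit-mean Gamma(m, rate m) power gain. -/
noncomputable def nakLaw (m : ℝ) : Measure ℝ :=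
  (volume.restrict (Ioi 0)).withDensity fun x =>
    ENNReal.ofReal (m ^ m / Real.Gamma m * x ^ (m - 1) * Real.exp (-m * x))

section nakAux
open Topology


lemma nak_hasDerivAt (n : ℕ) (c x : ℝ) :
    HasDerivAt (fun y : ℝ => -∑ k ∈ Finset.range (n+1),
        Real.exp (-(c*y)) * (c*y)^k / (Nat.factorial k))
      (c * (Real.exp (-(c*x)) * (c*x)^n / (Nat.factorial n))) x := by
  set W : ℕ → ℝ := fun j => if j = 0 then (0:ℝ) else
    c * (Real.exp (-(c*x)) * (c*x)^(j-1) / (Nat.factorial (j-1))) with hW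
  have key : ∀ k : ℕ, HasDerivAt
      (fun y : ℝ => Real.exp (-(c*y)) * (c*y)^k / (Nat.factorial k)) (W k - W (k+1)) x := by
    intro k
    have h1 : HasDerivAt (fun y : ℝ => -(c*y)) (-c) x := by
      have := ((hasDerivAt_id x).const_mul c).neg; simp at this; exact this
    have hexp : HasDerivAt (fun y : ℝ => Real.exp (-(c*y))) (Real.exp (-(c*x)) * (-c)) x := h1.exp
    have h2 : HasDerivAt (fun y : ℝ => c*y) c x := by simpa using (hasDerivAt_id x).const_mul c
    have hpow : HasDerivAt (fun y : ℝ => (c*y)^k) ((k:ℝ) * (c*x)^(k-1) * c) x := h2.pow k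
    have h : HasDerivAt (fun y : ℝ => Real.exp (-(c*y)) * (c*y)^k / (Nat.factorial k)) _ x :=
      (hexp.mul hpow).div_const (Nat.factorial k : ℝ)
    convert h using 1
    rcases k with _ | j
    · simp [hW, mul_comm]
    · simp only [hW, Nat.succ_ne_zero, if_false, Nat.add_sub_cancel]
      have hfac : ((j+1).factorial : ℝ) = (j+1) * j.factorial := by
        rw [Nat.factorial_succ]; push_cast; ring
      have hj : (j.factorial : ℝ) ≠ 0 := Nat.cast_ne_zero.mpr (Nat.factorial_ne_zero j)
      have hj1 : ((j+1).factorial : ℝ) ≠ 0 := Nat.cast_ne_zero.mpr (Nat.factorial_ne_zero (j+1))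
      field_simp [hfac]
      rw [hfac]; push_cast; ring
  have hsum := HasDerivAt.fun_sum (fun k (_ : k ∈ Finset.range (n+1)) => key k)
  rw [Finset.sum_range_sub'] at hsum
  have h : HasDerivAt (fun y : ℝ => -∑ k ∈ Finset.range (n+1),
      Real.exp (-(c*y)) * (c*y)^k / (Nat.factorial k)) _ x := hsum.neg
  convert h using 1
  simp [hW]

lemma int_pow_exp (N : ℕ) {r : ℝ} (hr : 0 < r) :
    IntegrableOn (fun x : ℝ => x ^ N * Real.exp (-(r*x))) (Ioi 0) := by
  have h := integrableOn_rpow_mul_exp_neg_mul_rpow (show (-1:ℝ) < (N:ℝ) from lt_of_lt_of_le (by norm_num) (Nat.cast_nonneg N)) one_pos hr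
  have heq : (fun x : ℝ => x ^ ((N:ℕ):ℝ) * Real.exp (-r * x ^ (1:ℝ)))
      = fun x : ℝ => x ^ N * Real.exp (-(r*x)) := by
    funext x; rw [Real.rpow_one, Real.rpow_natCast, neg_mul]
  rwa [heq] at h

lemma nak_survival (n : ℕ) {c t : ℝ} (hc : 0 < c) (ht : 0 ≤ t) :
    ∫ x in Ioi t, c * (Real.exp (-(c*x)) * (c*x)^n / (Nat.factorial n)) =
      ∑ k ∈ Finset.range (n+1), Real.exp (-(c*t)) * (c*t)^k / (Nat.factorial k) := by
  have hint : IntegrableOn (fun x : ℝ => c * (Real.exp (-(c*x)) * (c*x)^n / (Nat.factorial n)))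
      (Ioi t) := by
    have heq : (fun x : ℝ => c * (Real.exp (-(c*x)) * (c*x)^n / (Nat.factorial n)))
        = fun x : ℝ => (c^(n+1) / (Nat.factorial n)) * (x ^ n * Real.exp (-(c*x))) := by
      funext x; rw [mul_pow]; ring
    rw [heq]
    exact (((int_pow_exp n hc).mono_set (Ioi_subset_Ioi ht)).const_mul _)
  have hterm : ∀ k : ℕ, Tendsto
      (fun y : ℝ => Real.exp (-(c*y)) * (c*y)^k / (Nat.factorial k)) atTop (𝓝 0) := by
    intro k
    have h0 : Tendsto (fun y : ℝ => c * y) atTop atTop :=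
      Tendsto.const_mul_atTop hc tendsto_id
    have h1 := (tendsto_pow_mul_exp_neg_atTop_nhds_zero k).comp h0
    have h2 := h1.div_const (Nat.factorial k : ℝ)
    have heq : (fun y : ℝ => Real.exp (-(c*y)) * (c*y)^k / (Nat.factorial k))
        = fun y : ℝ => ((fun t : ℝ => t^k * Real.exp (-t)) ∘ (fun y : ℝ => c*y)) y
            / (Nat.factorial k) := by
      funext y; simp only [Function.comp_apply]; ring
    rw [heq]
    simpa using h2
  have hten : Tendsto (fun y : ℝ => -∑ k ∈ Finset.range (n+1),
      Real.exp (-(c*y)) * (c*y)^k / (Nat.factorial k)) atTop (𝓝 0) := by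
    have := (tendsto_finset_sum (Finset.range (n+1)) (fun k _ => hterm k)).neg
    simpa using this
  have h := integral_Ioi_of_hasDerivAt_of_tendsto' (a := t)
    (fun x _ => nak_hasDerivAt n c x) hint hten
  rw [h]; ring

lemma gamma_int (N : ℕ) {r : ℝ} (hr : 0 < r) :
    ∫ z in Ioi 0, z ^ N * Real.exp (-(r*z)) = (Nat.factorial N) / r^(N+1) := by
  have h := integral_rpow_mul_exp_neg_mul_Ioi (a := ((N:ℝ)+1)) (r := r) (by positivity) hr
  rw [show ((N:ℝ)+1-1) = ((N:ℕ):ℝ) by push_cast; ring] at h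
  simp_rw [Real.rpow_natCast] at h
  rw [show (fun z : ℝ => z ^ N * Real.exp (-(r*z))) = fun t : ℝ => t ^ N * Real.exp (-(r*t))
    from rfl]
  calc ∫ z in Ioi 0, z ^ N * Real.exp (-(r*z))
      = (1/r) ^ ((N:ℝ)+1) * Real.Gamma ((N:ℝ)+1) := by
        rw [← h]
    _ = (Nat.factorial N) / r^(N+1) := by
        rw [show ((N:ℝ)+1) = ((N+1:ℕ):ℝ) by push_cast; ring, Real.rpow_natCast,
          show (((N+1:ℕ):ℝ)) = (N:ℝ)+1 by push_cast; ring, Real.Gamma_nat_eq_factorial]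
        rw [one_div, inv_pow, inv_mul_eq_div]

/-- density of nakLaw (n+1) in natural-power form -/
noncomputable def nakF (n : ℕ) (x : ℝ) : ℝ :=
  ((n:ℝ)+1) * (Real.exp (-(((n:ℝ)+1)*x)) * (((n:ℝ)+1)*x)^n / (Nat.factorial n))

/-- survival function of nakLaw (n+1) -/
noncomputable def nakSv (n : ℕ) (t : ℝ) : ℝ :=
  ∑ k ∈ Finset.range (n+1), Real.exp (-(((n:ℝ)+1)*t)) * (((n:ℝ)+1)*t)^k / (Nat.factorial k)

lemma nakF_meas (n : ℕ) : Measurable (nakF n) := by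
  unfold nakF; fun_prop

lemma nakF_nonneg (n : ℕ) {x : ℝ} (hx : 0 ≤ x) : 0 ≤ nakF n x := by
  unfold nakF; positivity

lemma nakSv_nonneg (n : ℕ) {t : ℝ} (ht : 0 ≤ t) : 0 ≤ nakSv n t := by
  unfold nakSv; positivity

lemma nakSv_pos (n : ℕ) {t : ℝ} (ht : 0 ≤ t) : 0 < nakSv n t := by
  unfold nakSv
  have h0 : (0:ℝ) < Real.exp (-(((n:ℝ)+1)*t)) * (((n:ℝ)+1)*t)^0 / (Nat.factorial 0) := by
    simp [Real.exp_pos]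
  refine lt_of_lt_of_le h0 ?_
  refine Finset.single_le_sum (f := fun k => Real.exp (-(((n:ℝ)+1)*t)) * (((n:ℝ)+1)*t)^k / (Nat.factorial k))
    (fun k _ => by positivity) (by simp)

lemma nakLaw_eq (n : ℕ) : nakLaw ((n+1:ℕ):ℝ) =
    (volume.restrict (Ioi 0)).withDensity (fun x => ENNReal.ofReal (nakF n x)) := by
  unfold nakLaw
  congr 1
  funext x
  congr 1
  rw [Real.rpow_natCast, show ((n+1:ℕ):ℝ) - 1 = ((n:ℕ):ℝ) by push_cast; ring,
    Real.rpow_natCast, show ((n+1:ℕ):ℝ) = (n:ℝ)+1 by push_cast; ring,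
    Real.Gamma_nat_eq_factorial, neg_mul]
  unfold nakF
  rw [mul_pow]
  ring

lemma nakF_int (n : ℕ) {t : ℝ} (ht : 0 ≤ t) : IntegrableOn (nakF n) (Ioi t) := by
  have heq : nakF n = fun x : ℝ => (((n:ℝ)+1)^(n+1) / (Nat.factorial n)) *
      (x ^ n * Real.exp (-(((n:ℝ)+1)*x))) := by
    funext x; unfold nakF; rw [mul_pow]; ring
  rw [heq]
  exact (((int_pow_exp n (by positivity)).mono_set (Ioi_subset_Ioi ht)).const_mul _)

lemma nakD_Ici (n : ℕ) {t : ℝ} (ht : 0 < t) :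
    ((volume.restrict (Ioi 0)).withDensity (fun x => ENNReal.ofReal (nakF n x))) (Ici t)
      = ENNReal.ofReal (nakSv n t) := by
  have hsub : Ici t ∩ Ioi (0:ℝ) = Ici t :=
    Set.inter_eq_left.mpr (fun x hx => lt_of_lt_of_le ht hx)
  rw [withDensity_apply _ measurableSet_Ici, Measure.restrict_restrict measurableSet_Ici, hsub]
  have h1 : ∫⁻ x in Ici t, ENNReal.ofReal (nakF n x) = ∫⁻ x in Ioi t, ENNReal.ofReal (nakF n x) :=
    (setLIntegral_congr Ioi_ae_eq_Ici).symm
  rw [h1, ← ofReal_integral_eq_lintegral_ofReal (nakF_int n ht.le)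
    ((ae_restrict_iff' measurableSet_Ioi).mpr (ae_of_all _
      (fun x hx => nakF_nonneg n (le_of_lt (lt_trans ht hx)))))]
  exact congrArg ENNReal.ofReal (nak_survival n (by positivity) ht.le)

lemma nak_singleton (n : ℕ) (a : ℝ) : nakLaw ((n+1:ℕ):ℝ) {a} = 0 := by
  rw [nakLaw_eq, withDensity_apply _ (measurableSet_singleton a),
    Measure.restrict_restrict (measurableSet_singleton a)]
  exact setLIntegral_measure_zero _ _ (measure_mono_null Set.inter_subset_left Real.volume_singleton)

lemma nak_Ici (n : ℕ) {t : ℝ} (ht : 0 < t) :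
    nakLaw ((n+1:ℕ):ℝ) (Ici t) = ENNReal.ofReal (nakSv n t) := by
  rw [nakLaw_eq]; exact nakD_Ici n ht

lemma nak_Ioi_pos (n : ℕ) {t : ℝ} (ht : 0 < t) : 0 < nakLaw ((n+1:ℕ):ℝ) (Ioi t) := by
  have h1 : 0 < nakLaw ((n+1:ℕ):ℝ) (Ici t) := by
    rw [nak_Ici n ht]; exact ENNReal.ofReal_pos.mpr (nakSv_pos n ht.le)
  have h2 : nakLaw ((n+1:ℕ):ℝ) (Ici t) ≤ nakLaw ((n+1:ℕ):ℝ) (Ioi t) := by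
    calc nakLaw ((n+1:ℕ):ℝ) (Ici t) ≤ nakLaw ((n+1:ℕ):ℝ) (Ioi t ∪ {t}) := by
          refine measure_mono (fun x hx => ?_)
          rcases lt_or_eq_of_le (Set.mem_Ici.mp hx) with h | h
          · exact Or.inl h
          · exact Or.inr (by simp [h.symm])
      _ ≤ nakLaw ((n+1:ℕ):ℝ) (Ioi t) + nakLaw ((n+1:ℕ):ℝ) {t} := measure_union_le _ _
      _ = nakLaw ((n+1:ℕ):ℝ) (Ioi t) := by rw [nak_singleton, add_zero]
  exact lt_of_lt_of_le h1 h2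

lemma nak_Ioo_pos (n : ℕ) : 0 < nakLaw ((n+1:ℕ):ℝ) (Ioo 0 1) := by
  have hsub : Set.Ioo (0:ℝ) 1 ∩ Set.Ioi (0:ℝ) = Set.Ioo 0 1 := Set.inter_eq_left.mpr (fun x hx => hx.1)
  rw [nakLaw_eq, withDensity_apply _ measurableSet_Ioo,
    Measure.restrict_restrict measurableSet_Ioo, hsub]
  rcases eq_zero_or_pos (∫⁻ x in Ioo (0:ℝ) 1, ENNReal.ofReal (nakF n x)) with h | h
  · exfalso
    have h0 := (lintegral_eq_zero_iff ((nakF_meas n).ennreal_ofReal)).mp h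
    rw [EventuallyEq, ae_restrict_iff' measurableSet_Ioo] at h0
    have h1 : ∀ᵐ x ∂(volume : Measure ℝ), x ∉ Ioo (0:ℝ) 1 := by
      filter_upwards [h0] with x hx
      intro hmem
      have := hx hmem
      rw [Pi.zero_apply, ENNReal.ofReal_eq_zero] at this
      have hpos : 0 < nakF n x := by
        have hx0 : 0 < x := hmem.1
        have hc : (0:ℝ) < (n:ℝ)+1 := by positivity
        have hfac : (0:ℝ) < (Nat.factorial n : ℝ) := by positivity
        unfold nakF
        exact mul_pos hc (div_pos (mul_pos (Real.exp_pos _) (pow_pos (mul_pos hc hx0) n)) hfac)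
      linarith
    have h2 : (volume : Measure ℝ) (Ioo (0:ℝ) 1) = 0 := measure_eq_zero_iff_ae_notMem.mpr h1
    rw [Real.volume_Ioo] at h2
    simp at h2
  · exact h

lemma nakFSv_eq (n : ℕ) (A z : ℝ) : nakF n z * nakSv n (A*z) =
    ∑ r ∈ Finset.range (n+1),
      (((n:ℝ)+1)^(n+1) * ((((n:ℝ)+1))*A)^r / ((Nat.factorial n : ℝ) * (Nat.factorial r))) *
        (z^(n+r) * Real.exp (-(((((n:ℝ)+1))*(A+1))*z))) := by
  unfold nakF nakSv
  rw [Finset.mul_sum]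
  refine Finset.sum_congr rfl fun r _ => ?_
  have he : Real.exp (-((((n:ℝ)+1))*(A+1)*z)) =
      Real.exp (-(((n:ℝ)+1)*z)) * Real.exp (-(((n:ℝ)+1)*(A*z))) := by
    rw [← Real.exp_add]; ring_nf
  rw [he]
  simp only [mul_pow, pow_add]
  ring

lemma nakFSv_integrable (n : ℕ) {A : ℝ} (hA : 0 < A) :
    IntegrableOn (fun z => nakF n z * nakSv n (A*z)) (Ioi 0) := by
  rw [show (fun z => nakF n z * nakSv n (A*z)) = fun z => ∑ r ∈ Finset.range (n+1),
      (((n:ℝ)+1)^(n+1) * ((((n:ℝ)+1))*A)^r / ((Nat.factorial n : ℝ) * (Nat.factorial r))) *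
        (z^(n+r) * Real.exp (-(((((n:ℝ)+1))*(A+1))*z))) from funext (nakFSv_eq n A)]
  exact integrable_finset_sum _ fun r _ =>
    ((int_pow_exp (n+r) (show (0:ℝ) < ((n:ℝ)+1)*(A+1) by positivity)).const_mul _)

lemma nakFSv_nonneg (n : ℕ) {A : ℝ} (hA : 0 < A) {z : ℝ} (hz : 0 ≤ z) :
    0 ≤ nakF n z * nakSv n (A*z) :=
  mul_nonneg (nakF_nonneg n hz) (nakSv_nonneg n (by positivity))

lemma nak_outer (n : ℕ) {A : ℝ} (hA : 0 < A) :
    ∫ z in Ioi 0, nakF n z * nakSv n (A*z) =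
      ∑ r ∈ Finset.range (n+1),
        ((n+r).factorial : ℝ) / ((Nat.factorial n : ℝ) * (Nat.factorial r)) *
          (A^r/(A+1)^(n+1+r)) := by
  simp_rw [nakFSv_eq n A]
  rw [integral_finset_sum _ (fun r _ =>
    ((int_pow_exp (n+r) (show (0:ℝ) < ((n:ℝ)+1)*(A+1) by positivity)).const_mul _))]
  refine Finset.sum_congr rfl fun r _ => ?_
  rw [integral_const_mul, gamma_int (n+r) (show (0:ℝ) < ((n:ℝ)+1)*(A+1) by positivity)]
  have hfn : (Nat.factorial n : ℝ) ≠ 0 := by positivity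
  have hfr : (Nat.factorial r : ℝ) ≠ 0 := by positivity
  have key : ∀ u v : ℝ, u ≠ 0 → v ≠ 0 →
      u^(n+1) * (u*A)^r / ((Nat.factorial n : ℝ) * (Nat.factorial r)) *
        (((n+r).factorial : ℝ) / (u*v)^(n+r+1)) =
      ((n+r).factorial : ℝ) / ((Nat.factorial n : ℝ) * (Nat.factorial r)) * (A^r / v^(n+1+r)) := by
    intro u v hu hv
    rw [mul_pow, mul_pow]
    field_simp
    ring
  exact key ((n:ℝ)+1) (A+1) (by positivity) (by positivity)

lemma nak_prod_le (n : ℕ) [IsProbabilityMeasure (nakLaw ((n+1:ℕ):ℝ))] {A : ℝ} (hA : 0 < A) :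
    ((nakLaw ((n+1:ℕ):ℝ)).prod (nakLaw ((n+1:ℕ):ℝ))) {p : ℝ × ℝ | A * p.2 ≤ p.1} =
      ENNReal.ofReal (∑ r ∈ Finset.range (n+1),
        ((n+r).factorial : ℝ) / ((Nat.factorial n : ℝ) * (Nat.factorial r)) *
          (A^r/(A+1)^(n+1+r))) := by
  have hs : MeasurableSet {p : ℝ × ℝ | A * p.2 ≤ p.1} :=
    measurableSet_le (measurable_snd.const_mul A) measurable_fst
  rw [nakLaw_eq n, Measure.prod_apply_symm hs]
  have hslice : ∀ z : ℝ, (fun x => (x, z)) ⁻¹' {p : ℝ × ℝ | A * p.2 ≤ p.1} = Ici (A*z) :=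
    fun z => rfl
  simp_rw [hslice]
  have hG : Measurable (fun z : ℝ =>
      ((volume.restrict (Ioi 0)).withDensity (fun x => ENNReal.ofReal (nakF n x))) (Ici (A*z))) := by
    have h1 : Antitone (fun t : ℝ =>
        ((volume.restrict (Ioi 0)).withDensity (fun x => ENNReal.ofReal (nakF n x))) (Ici t)) :=
      fun s t hst => measure_mono (Ici_subset_Ici.mpr hst)
    exact h1.measurable.comp (measurable_id.const_mul A)
  rw [lintegral_withDensity_eq_lintegral_mul _ ((nakF_meas n).ennreal_ofReal) hG]
  have hcong : ∫⁻ z in Ioi 0, ((fun x => ENNReal.ofReal (nakF n x)) *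
      (fun z : ℝ =>
        ((volume.restrict (Ioi 0)).withDensity (fun x => ENNReal.ofReal (nakF n x))) (Ici (A*z)))) z =
      ∫⁻ z in Ioi 0, ENNReal.ofReal (nakF n z * nakSv n (A*z)) := by
    refine setLIntegral_congr_fun measurableSet_Ioi (fun z hz => ?_)
    have hz0 : (0:ℝ) < z := hz
    rw [Pi.mul_apply, nakD_Ici n (by positivity), ← ENNReal.ofReal_mul (nakF_nonneg n hz0.le)]
  rw [hcong, ← ofReal_integral_eq_lintegral_ofReal (nakFSv_integrable n hA)
    ((ae_restrict_iff' measurableSet_Ioi).mpr (ae_of_all _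
      (fun z hz => nakFSv_nonneg n hA (le_of_lt hz)))),
    nak_outer n hA]

end nakAux

/-- High-SNR outage floor: for i.i.d. Gamma(m,m) gains X, Z and A > 0,
P(X < AZ + B₀) → P(X < AZ) as B₀ → 0⁺, with
P(X < AZ) = 1 − Σ_{r=0}^{m−1} C(m−1+r, r) A^r/(A+1)^{m+r} > 0, and equivalently
P(X ≥ AZ) = Σ_{r=0}^{m−1} Γ(m+r)/(Γ(m) r!) · A^r/(A+1)^{m+r}. -/
theorem outage_floor_high_snr {Ω : Type*} [MeasurableSpace Ω]
    (P : Measure Ω) [IsProbabilityMeasure P] (m : ℕ) (hm : 0 < m)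
    (X Z : Ω → ℝ) (hXmeas : Measurable X) (hZmeas : Measurable Z)
    (hindep : ProbabilityTheory.IndepFun X Z P)
    (hX : Measure.map X P = nakLaw m) (hZ : Measure.map Z P = nakLaw m)
    (A : ℝ) (hA : 0 < A) :
    Tendsto (fun B₀ : ℝ => (P {ω | X ω < A * Z ω + B₀}).toReal)
        (nhdsWithin 0 (Ioi 0)) (nhds ((P {ω | X ω < A * Z ω}).toReal)) ∧
    (P {ω | X ω < A * Z ω}).toReal =
      1 - ∑ r ∈ Finset.range m,
            ((m - 1 + r).choose r : ℝ) * A ^ r / (A + 1) ^ (m + r) ∧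
    0 < (P {ω | X ω < A * Z ω}).toReal ∧
    (P {ω | A * Z ω ≤ X ω}).toReal =
      ∑ r ∈ Finset.range m,
        Real.Gamma ((m : ℝ) + r) / (Real.Gamma m * Nat.factorial r) *
          (A ^ r / (A + 1) ^ (m + r)) := by
  obtain ⟨n, rfl⟩ : ∃ n, m = n + 1 := ⟨m - 1, (Nat.succ_pred_eq_of_pos hm).symm⟩
  haveI hPμ : IsProbabilityMeasure (nakLaw ((n+1:ℕ):ℝ)) :=
    hX ▸ Measure.isProbabilityMeasure_map hXmeas.aemeasurable
  have hpair : Measurable fun ω => (X ω, Z ω) := hXmeas.prodMk hZmeas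
  have hmap : P.map (fun ω => (X ω, Z ω)) = (nakLaw ((n+1:ℕ):ℝ)).prod (nakLaw ((n+1:ℕ):ℝ)) := by
    have h := (ProbabilityTheory.indepFun_iff_map_prod_eq_prod_map_map
      hXmeas.aemeasurable hZmeas.aemeasurable).mp hindep
    rw [hX, hZ] at h
    exact h
  have hPset : ∀ s : Set (ℝ × ℝ), MeasurableSet s →
      P ((fun ω => (X ω, Z ω)) ⁻¹' s) = ((nakLaw ((n+1:ℕ):ℝ)).prod (nakLaw ((n+1:ℕ):ℝ))) s :=
    fun s hs => by rw [← hmap, Measure.map_apply hpair hs]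
  -- measurable sets
  have hs_le : MeasurableSet {p : ℝ × ℝ | A * p.2 ≤ p.1} :=
    measurableSet_le (measurable_snd.const_mul A) measurable_fst
  have hs_lt : MeasurableSet {p : ℝ × ℝ | p.1 < A * p.2} :=
    measurableSet_lt measurable_fst (measurable_snd.const_mul A)
  have hs_eq : MeasurableSet {p : ℝ × ℝ | p.1 = A * p.2} :=
    measurableSet_eq_fun measurable_fst (measurable_snd.const_mul A)
  -- Goal 4
  have g4 : (P {ω | A * Z ω ≤ X ω}).toReal =
      ∑ r ∈ Finset.range (n+1),
        Real.Gamma (((n+1:ℕ) : ℝ) + r) / (Real.Gamma ((n+1:ℕ):ℝ) * Nat.factorial r) *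
          (A ^ r / (A + 1) ^ (n+1+r)) := by
    have e3 : {ω | A * Z ω ≤ X ω} = (fun ω => (X ω, Z ω)) ⁻¹' {p : ℝ × ℝ | A * p.2 ≤ p.1} := rfl
    rw [e3, hPset _ hs_le, nak_prod_le n hA, ENNReal.toReal_ofReal (by positivity)]
    refine Finset.sum_congr rfl fun r _ => ?_
    rw [show (((n+1:ℕ):ℝ)) + r = ((n+r:ℕ):ℝ) + 1 by push_cast; ring,
      Real.Gamma_nat_eq_factorial,
      show (((n+1:ℕ):ℝ)) = ((n:ℕ):ℝ) + 1 by push_cast; ring,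
      Real.Gamma_nat_eq_factorial]
  -- Goal 2
  have g2 : (P {ω | X ω < A * Z ω}).toReal =
      1 - ∑ r ∈ Finset.range (n+1), ((n+1-1+r).choose r : ℝ) * A ^ r / (A + 1) ^ (n+1+r) := by
    have hcompl : {ω | X ω < A * Z ω} = {ω | A * Z ω ≤ X ω}ᶜ := by
      ext ω; simp [not_le]
    have hsle' : MeasurableSet {ω | A * Z ω ≤ X ω} := measurableSet_le (hZmeas.const_mul A) hXmeas
    rw [hcompl, measure_compl hsle' (measure_ne_top P _), measure_univ,
      ENNReal.toReal_sub_of_le prob_le_one ENNReal.one_ne_top, ENNReal.toReal_one, g4]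
    congr 1
    refine Finset.sum_congr rfl fun r _ => ?_
    have h1 : ((n+1-1+r).choose r : ℝ) = ((n+r).factorial : ℝ) /
        ((Nat.factorial r : ℝ) * (Nat.factorial n : ℝ)) := by
      have h2 := Nat.choose_mul_factorial_mul_factorial (Nat.le_add_left r n)
      rw [Nat.add_sub_cancel] at h2
      have h3 : (((n+r).choose r : ℕ) : ℝ) * (Nat.factorial r : ℝ) * (Nat.factorial n : ℝ)
          = ((n+r).factorial : ℝ) := by exact_mod_cast h2
      have hfr : (Nat.factorial r : ℝ) ≠ 0 := by positivity
      have hfn : (Nat.factorial n : ℝ) ≠ 0 := by positivity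
      field_simp [Nat.add_sub_cancel]
      rw [Nat.add_sub_cancel]
      exact h3
    rw [show (((n+1:ℕ):ℝ)) + r = ((n+r:ℕ):ℝ) + 1 by push_cast; ring,
      Real.Gamma_nat_eq_factorial,
      show (((n+1:ℕ):ℝ)) = ((n:ℕ):ℝ) + 1 by push_cast; ring,
      Real.Gamma_nat_eq_factorial, h1]
    ring
  -- Goal 3
  have g3 : 0 < (P {ω | X ω < A * Z ω}).toReal := by
    have e2 : {ω | X ω < A * Z ω} = (fun ω => (X ω, Z ω)) ⁻¹' {p : ℝ × ℝ | p.1 < A * p.2} := rfl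
    have hrect : (Set.Ioo (0:ℝ) 1) ×ˢ (Set.Ioi (1/A)) ⊆ {p : ℝ × ℝ | p.1 < A * p.2} := by
      rintro ⟨x, z⟩ ⟨hx, hz⟩
      simp only [Set.mem_Ioo, Set.mem_Ioi, Set.mem_setOf_eq] at *
      have h1 : (1:ℝ) = A * (1/A) := by field_simp
      calc x < 1 := hx.2
        _ = A * (1/A) := h1
        _ < A * z := by exact mul_lt_mul_of_pos_left hz hA
    have hpos : 0 < ((nakLaw ((n+1:ℕ):ℝ)).prod (nakLaw ((n+1:ℕ):ℝ))) {p : ℝ × ℝ | p.1 < A * p.2} := by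
      refine lt_of_lt_of_le ?_ (measure_mono hrect)
      rw [Measure.prod_prod]
      exact ENNReal.mul_pos (nak_Ioo_pos n).ne' (nak_Ioi_pos n (by positivity)).ne'
    rw [e2, hPset _ hs_lt]
    exact ENNReal.toReal_pos hpos.ne' (measure_ne_top _ _)
  -- Goal 1
  have g1 : Tendsto (fun B₀ : ℝ => (P {ω | X ω < A * Z ω + B₀}).toReal)
      (nhdsWithin 0 (Ioi 0)) (nhds ((P {ω | X ω < A * Z ω}).toReal)) := by
    have hEqZero : P {ω | X ω = A * Z ω} = 0 := by
      have e5 : {ω | X ω = A * Z ω} = (fun ω => (X ω, Z ω)) ⁻¹' {p : ℝ × ℝ | p.1 = A * p.2} := rfl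
      rw [e5, hPset _ hs_eq, Measure.prod_apply_symm hs_eq]
      have hsl : ∀ z : ℝ, (fun x => (x, z)) ⁻¹' {p : ℝ × ℝ | p.1 = A * p.2} = {A*z} := by
        intro z; ext x; simp
      simp_rw [hsl, nak_singleton n]
      simp
    have hXAZ_eq : P {ω | X ω ≤ A * Z ω} = P {ω | X ω < A * Z ω} := by
      refine le_antisymm ?_ (measure_mono fun ω h => by
        simp only [Set.mem_setOf_eq] at *; exact le_of_lt h)
      calc P {ω | X ω ≤ A * Z ω}
          ≤ P ({ω | X ω < A * Z ω} ∪ {ω | X ω = A * Z ω}) := by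
            refine measure_mono fun ω h => ?_
            have h2 : X ω ≤ A * Z ω := h
            rcases h2.lt_or_eq with h' | h'
            · exact Or.inl h'
            · exact Or.inr h'
        _ ≤ P {ω | X ω < A * Z ω} + P {ω | X ω = A * Z ω} := measure_union_le _ _
        _ = P {ω | X ω < A * Z ω} := by rw [hEqZero, add_zero]
    have hmono : Monotone (fun B : ℝ => (P {ω | X ω < A * Z ω + B}).toReal) := by
      intro B1 B2 h
      refine ENNReal.toReal_mono (measure_ne_top _ _) (measure_mono fun ω hω => ?_)
      simp only [Set.mem_setOf_eq] at *
      linarith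
    have hL_le : ∀ B : ℝ, 0 < B →
        (P {ω | X ω ≤ A * Z ω}).toReal ≤ (P {ω | X ω < A * Z ω + B}).toReal := by
      intro B hB
      exact ENNReal.toReal_mono (measure_ne_top _ _)
        (measure_mono fun ω hω => by simp only [Set.mem_setOf_eq] at *; linarith)
    have hseq : Tendsto (fun k : ℕ => (P {ω | X ω < A * Z ω + 1/((k:ℝ)+1)}).toReal) atTop
        (nhds ((P {ω | X ω ≤ A * Z ω}).toReal)) := by
      have hsets : ∀ k : ℕ, MeasurableSet {ω | X ω < A * Z ω + 1/((k:ℝ)+1)} := fun k =>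
        measurableSet_lt hXmeas ((hZmeas.const_mul A).add_const _)
      have hanti : Antitone (fun k : ℕ => {ω | X ω < A * Z ω + 1/((k:ℝ)+1)}) := by
        intro i j hij ω hω
        have hle : 1/((j:ℝ)+1) ≤ 1/((i:ℝ)+1) := by
          apply one_div_le_one_div_of_le (by positivity)
          exact_mod_cast add_le_add_left (Nat.cast_le.mpr hij) 1
        simp only [Set.mem_setOf_eq] at *
        linarith
      have hiInter : (⋂ k : ℕ, {ω | X ω < A * Z ω + 1/((k:ℝ)+1)}) = {ω | X ω ≤ A * Z ω} := by
        ext ω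
        simp only [Set.mem_iInter, Set.mem_setOf_eq]
        constructor
        · intro h
          by_contra hlt
          push_neg at hlt
          obtain ⟨k, hk⟩ := exists_nat_one_div_lt (sub_pos.mpr hlt)
          have := h k
          linarith
        · intro h k
          have : 0 < 1/((k:ℝ)+1) := by positivity
          linarith
      have ht := tendsto_measure_iInter_atTop (fun k => (hsets k).nullMeasurableSet) hanti
        ⟨0, measure_ne_top P _⟩
      rw [hiInter] at ht
      have := (ENNReal.tendsto_toReal (measure_ne_top P {ω | X ω ≤ A * Z ω})).comp ht
      simpa [Function.comp_def] using this
    rw [← ENNReal.toReal_eq_toReal_iff' (measure_ne_top _ _) (measure_ne_top _ _)] at hXAZ_eq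
    rw [← hXAZ_eq]
    rw [tendsto_order]
    constructor
    · intro a ha
      filter_upwards [self_mem_nhdsWithin] with B hB
      exact lt_of_lt_of_le ha (hL_le B hB)
    · intro a ha
      have hev : ∀ᶠ k : ℕ in atTop,
          (P {ω | X ω < A * Z ω + 1/((k:ℝ)+1)}).toReal < a := hseq.eventually_lt_const ha
      obtain ⟨k, hk⟩ := hev.exists
      filter_upwards [Ioo_mem_nhdsGT (show (0:ℝ) < 1/((k:ℝ)+1) by positivity)] with B hB
      exact lt_of_le_of_lt (hmono hB.2.le) hk
  exact ⟨g1, g2, g3, g4⟩
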